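/- Let (G_n,d_n) be a sequence of admissible pairs with v(G_n) ≥ 1, d_n > 1 for all n, and d_n → ∞. Then for every connected graph F, the sequence t(F,G_n,d_n) converges if and only if the sequence t_inj(F,G_n,d_n) converges, and in that case the two limits are equal. -/

import Mathlib

open Filter Topology

noncomputable def homCount {α β : Type*} (F : SimpleGraph α) (G : SimpleGraph β) : ℕ :=
  Nat.card (F →g G)

noncomputable def injCount {α β : Type*} (F : SimpleGraph α) (G : SimpleGraph β) : ℕ :=
  Nat.card {f : F →g G // Function.Injective f}

noncomputable def vdegree {α : Type*} (G : SimpleGraph α) (x : α) : ℕ :=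
  Nat.card (G.neighborSet x)

noncomputable def edgeCount {α : Type*} (G : SimpleGraph α) : ℕ := Nat.card G.edgeSet

noncomputable def numComponents {α : Type*} (F : SimpleGraph α) : ℕ :=
  Nat.card F.ConnectedComponent

noncomputable def numBigComponents {α : Type*} (F : SimpleGraph α) : ℕ :=
  Nat.card {c : F.ConnectedComponent // 2 ≤ Nat.card c.supp}

def Admissible {α : Type*} (G : SimpleGraph α) (d : ℝ) : Prop :=
  1 ≤ d ∧ ∀ x : α, (vdegree G x : ℝ) ≤ d

noncomputable def homDensity {α β : Type*} (F : SimpleGraph α) (G : SimpleGraph β) (d : ℝ) : ℝ :=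
  (homCount F G : ℝ) /
    ((Nat.card β : ℝ) ^ numComponents F * d ^ (Nat.card α - numComponents F))

noncomputable def injDensity {α β : Type*} (F : SimpleGraph α) (G : SimpleGraph β) (d : ℝ) : ℝ :=
  (injCount F G : ℝ) /
    ((Nat.card β : ℝ) ^ numComponents F * d ^ numBigComponents F *
      (d - 1) ^ (Nat.card α - numComponents F - numBigComponents F))

section AuxiliaryLemmas
open SimpleGraph

section Helpers1

open SimpleGraph
variable {V : Type*}

instance finHom {α β : Type*} [Finite α] [Finite β] (F : SimpleGraph α) (G : SimpleGraph β) :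
    Finite (F →g G) :=
  Finite.of_injective (fun f => (f : α → β)) DFunLike.coe_injective

lemma reachable_induce_of_walk {G : SimpleGraph V} {s : Set V} {a b : V}
    (p : G.Walk a b) (hp : ∀ x ∈ p.support, x ∈ s) :
    (G.induce s).Reachable ⟨a, hp a p.start_mem_support⟩ ⟨b, hp b p.end_mem_support⟩ := by
  induction p with
  | nil => exact SimpleGraph.Reachable.refl _
  | @cons u c w h q ih =>
    have hq : ∀ x ∈ q.support, x ∈ s := fun x hx => hp x (by simp [hx])
    have h1 : (G.induce s).Adj ⟨u, hp u (SimpleGraph.Walk.start_mem_support _)⟩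
        ⟨c, hq c q.start_mem_support⟩ := by
      simpa [SimpleGraph.comap_adj] using h
    exact h1.reachable.trans (ih hq)

lemma exists_adj_of_connected {G : SimpleGraph V} (hG : G.Connected) {v w : V} (hvw : w ≠ v) :
    ∃ u, G.Adj u v := by
  obtain ⟨p⟩ := hG.preconnected v w
  cases p with
  | nil => exact absurd rfl hvw.symm
  | cons h q => exact ⟨_, h.symm⟩

lemma exists_delete_connected [Fintype V] (G : SimpleGraph V)
    (hG : G.Connected) (h2 : 2 ≤ Fintype.card V) :
    ∃ v : V, (G.induce {x | x ≠ v}).Connected := by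
  classical
  haveI : Nonempty V := hG.nonempty
  obtain ⟨u⟩ := hG.nonempty
  obtain ⟨v, hv⟩ := Finite.exists_max (fun x => G.dist u x)
  have huv : u ≠ v := by
    rintro rfl
    have hall : ∀ x : V, x = u := by
      intro x
      have hx0 : G.dist u x ≤ G.dist u u := hv x
      rw [SimpleGraph.dist_self] at hx0
      have h0 : G.dist u x = 0 := Nat.le_zero.mp hx0
      exact (hG.dist_eq_zero_iff.mp h0).symm
    have : Fintype.card V ≤ 1 := Fintype.card_le_one_iff.mpr fun a b => (hall a).trans (hall b).symm
    omega
  have key : ∀ (x : V) (hx : x ∈ {y | y ≠ v}),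
      (G.induce {y | y ≠ v}).Reachable ⟨u, huv⟩ ⟨x, hx⟩ := by
    intro x hx
    obtain ⟨p, hp⟩ := hG.exists_walk_length_eq_dist u x
    have hsupp : ∀ y ∈ p.support, y ∈ {y | y ≠ v} := by
      intro y hy
      rintro rfl
      have hsplit : (p.takeUntil y hy).length + (p.dropUntil y hy).length = p.length := by
        rw [← SimpleGraph.Walk.length_append, SimpleGraph.Walk.take_spec]
      have h1 : G.dist u y ≤ (p.takeUntil y hy).length := SimpleGraph.dist_le _
      have h2 : G.dist y x ≤ (p.dropUntil y hy).length := SimpleGraph.dist_le _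
      have h3 : G.dist u x ≤ G.dist u y := hv x
      have h4 : G.dist y x = 0 := by omega
      exact hx (hG.dist_eq_zero_iff.mp h4).symm
    exact reachable_induce_of_walk p hsupp
  refine ⟨v, ?_⟩
  haveI : Nonempty {x : V | x ≠ v} := ⟨⟨u, huv⟩⟩
  constructor
  rintro ⟨a, ha⟩ ⟨b, hb⟩
  exact (key a ha).symm.trans (key b hb)

end Helpers1

universe u

lemma homCount_le {β : Type*} [Fintype β] (Γ : SimpleGraph β) (D : ℕ)
    (hΓ : ∀ x : β, Nat.card (Γ.neighborSet x) ≤ D) :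
    ∀ (k : ℕ) {α : Type u} [Fintype α] (H : SimpleGraph α),
      H.Connected → Fintype.card α = k →
      homCount H Γ ≤ Fintype.card β * D ^ (k - 1) := by
  intro k
  induction k using Nat.strong_induction_on with
  | _ k ih =>
    intro α _ H hH hcard
    classical
    rcases Nat.lt_or_ge k 2 with hk | hk
    · have hne : Nonempty α := hH.nonempty
      have hk0 : k ≠ 0 := by
        rw [← hcard]; exact Fintype.card_ne_zero
      have hk1 : k = 1 := by omega
      subst hk1
      have hle : homCount H Γ ≤ Nat.card (α → β) :=
        Nat.card_le_card_of_injective _ DFunLike.coe_injective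
      have heq : Nat.card (α → β) = Fintype.card β := by
        rw [Nat.card_eq_fintype_card, Fintype.card_fun, hcard, pow_one]
      have hfin : homCount H Γ ≤ Fintype.card β := heq ▸ hle
      simpa using hfin
    · obtain ⟨v, hvconn⟩ := exists_delete_connected H hH (hcard ▸ hk)
      obtain ⟨w, hw⟩ := Fintype.exists_ne_of_one_lt_card (by omega : 1 < Fintype.card α) v
      obtain ⟨u, huv⟩ := exists_adj_of_connected hH hw
      rcases Nat.eq_zero_or_pos D with hD | hD
      · -- D = 0 : no homomorphisms at all
        have hemp : IsEmpty (H →g Γ) := by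
          constructor
          intro f
          have hadj : Γ.Adj (f u) (f v) := f.map_rel huv
          have h1 : 1 ≤ Nat.card (Γ.neighborSet (f u)) :=
            Nat.one_le_iff_ne_zero.mpr
              (Nat.card_ne_zero.mpr ⟨⟨⟨f v, hadj⟩⟩, Subtype.finite⟩)
          have := hΓ (f u); omega
        have : homCount H Γ = 0 := by
          simp [homCount, Nat.card_of_isEmpty]
        simp [this]
      · -- main inductive step
        haveI : Inhabited (Fin D) := ⟨⟨0, hD⟩⟩
        -- for every b : β, an injection on the neighbor set into Fin D
        have hemb : ∀ b : β, ∃ e : β → Fin D,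
            ∀ x ∈ Γ.neighborSet b, ∀ y ∈ Γ.neighborSet b, e x = e y → x = y := by
          intro b
          haveI : Fintype (Γ.neighborSet b) := Fintype.ofFinite _
          have hcardle : Fintype.card (Γ.neighborSet b) ≤ Fintype.card (Fin D) := by
            rw [Fintype.card_fin, ← Nat.card_eq_fintype_card]; exact hΓ b
          obtain ⟨emb⟩ := Function.Embedding.nonempty_of_card_le hcardle
          refine ⟨fun x => if h : x ∈ Γ.neighborSet b then emb ⟨x, h⟩ else default,
            fun x hx y hy hxy => ?_⟩
          dsimp only at hxy
          rw [dif_pos hx, dif_pos hy] at hxy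
          exact Subtype.ext_iff.mp (emb.injective hxy)
        choose e he using hemb
        set s : Set α := {x : α | x ≠ v} with hs
        have huvne : u ≠ v := H.ne_of_adj huv
        let ι : H.induce s ↪g H := SimpleGraph.Embedding.induce s
        let φ : (H →g Γ) → ((H.induce s →g Γ) × Fin D) :=
          fun f => (f.comp ι.toHom, e (f u) (f v))
        have hφ : Function.Injective φ := by
          intro f g hfg
          have h1 : f.comp ι.toHom = g.comp ι.toHom := congrArg Prod.fst hfg
          have h2 : e (f u) (f v) = e (g u) (g v) := congrArg Prod.snd hfg
          have hrest : ∀ x : α, x ≠ v → f x = g x := by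
            intro x hx
            exact DFunLike.congr_fun h1 (⟨x, hx⟩ : s)
          have hu' : f u = g u := hrest u huvne
          have hv' : f v = g v := by
            have hfv : f v ∈ Γ.neighborSet (f u) := f.map_rel huv
            have hgv : g v ∈ Γ.neighborSet (g u) := g.map_rel huv
            rw [hu'] at hfv h2
            exact he (g u) (f v) hfv (g v) hgv h2
          refine DFunLike.ext f g fun x => ?_
          by_cases hx : x = v
          · rw [hx]; exact hv'
          · exact hrest x hx
        have hccard : homCount H Γ ≤ Nat.card ((H.induce s →g Γ) × Fin D) :=
          Nat.card_le_card_of_injective φ hφ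
        have hprod : Nat.card ((H.induce s →g Γ) × Fin D)
            = Nat.card (H.induce s →g Γ) * D := by
          simp [Nat.card_prod]
        have hscard : Fintype.card s = k - 1 := by
          have h1 : Fintype.card s = Fintype.card {x : α // ¬ (x = v)} :=
            Fintype.card_congr (Equiv.subtypeEquivRight fun x => Iff.rfl)
          rw [h1, Fintype.card_subtype_compl, Fintype.card_subtype_eq, hcard]
        have hrec := ih (k-1) (by omega) (H.induce s) hvconn hscard
        have hrec2 : Nat.card (H.induce s →g Γ) ≤ Fintype.card β * D ^ (k - 2) := by
          have hexp : k - 1 - 1 = k - 2 := by omega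
          rw [← hexp]
          exact hrec
        calc homCount H Γ ≤ Nat.card (H.induce s →g Γ) * D := hprod ▸ hccard
          _ ≤ (Fintype.card β * D ^ (k - 2)) * D := Nat.mul_le_mul_right _ hrec2
          _ = Fintype.card β * D ^ (k - 1) := by
              rw [mul_assoc, ← pow_succ]
              have hexp2 : k - 2 + 1 = k - 1 := by omega
              rw [hexp2]

def contract {α : Type u} (H : SimpleGraph α) (u v : α) : SimpleGraph {x : α // x ≠ v} where
  Adj a b := a.1 ≠ b.1 ∧
    (H.Adj a.1 b.1 ∨ (a.1 = u ∧ H.Adj v b.1) ∨ (b.1 = u ∧ H.Adj a.1 v))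
  symm := by
    constructor
    rintro a b ⟨hne, h⟩
    refine ⟨hne.symm, ?_⟩
    rcases h with h | ⟨h1, h2⟩ | ⟨h1, h2⟩
    · exact Or.inl h.symm
    · exact Or.inr (Or.inr ⟨h1, h2.symm⟩)
    · exact Or.inr (Or.inl ⟨h1, h2.symm⟩)
  loopless := ⟨fun a h => h.1 rfl⟩

lemma contract_connected {α : Type u} {H : SimpleGraph α} (hH : H.Connected) {u v : α}
    (hne : u ≠ v) (hnadj : ¬H.Adj u v) : (contract H u v).Connected := by
  classical
  let π : H →g contract H u v :=
    { toFun := fun x => if h : x = v then ⟨u, hne⟩ else ⟨x, h⟩,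
      map_rel' := by
        intro a b hab
        by_cases ha : a = v <;> by_cases hb : b = v
        · exact absurd (ha.trans hb.symm) (H.ne_of_adj hab)
        · subst ha
          rw [dif_pos rfl, dif_neg hb]
          refine ⟨?_, Or.inr (Or.inl ⟨rfl, hab⟩)⟩
          intro h; dsimp only at h; rw [h] at hnadj; exact hnadj hab.symm
        · subst hb
          rw [dif_pos rfl, dif_neg ha]
          refine ⟨?_, Or.inr (Or.inr ⟨rfl, hab⟩)⟩
          intro h; dsimp only at h; rw [h] at hab; exact hnadj hab
        · rw [dif_neg ha, dif_neg hb]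
          exact ⟨H.ne_of_adj hab, Or.inl hab⟩ }
  have hsurj : Function.Surjective π := by
    rintro ⟨x, hx⟩
    refine ⟨x, ?_⟩
    show (if h : x = v then (⟨u, hne⟩ : {x : α // x ≠ v}) else ⟨x, h⟩) = ⟨x, hx⟩
    rw [dif_neg hx]
  exact hH.map π hsurj

lemma noninjCount_le {β : Type*} [Fintype β] (Γ : SimpleGraph β) (D : ℕ)
    (hΓ : ∀ x : β, Nat.card (Γ.neighborSet x) ≤ D)
    {α : Type u} [Fintype α] (H : SimpleGraph α) (hH : H.Connected) :
    Nat.card {f : H →g Γ // ¬ Function.Injective f}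
      ≤ Fintype.card α ^ 2 * (Fintype.card β * D ^ (Fintype.card α - 2)) := by
  classical
  set k := Fintype.card α with hk
  have hsel : ∀ f : {f : H →g Γ // ¬ Function.Injective f},
      ∃ p : α × α, (p.1 ≠ p.2 ∧ ¬H.Adj p.1 p.2) ∧ f.1 p.1 = f.1 p.2 := by
    rintro ⟨f, hf⟩
    obtain ⟨a, b, hfeq, hab⟩ := Function.not_injective_iff.mp hf
    refine ⟨(a, b), ⟨hab, fun hadj => ?_⟩, hfeq⟩
    have : Γ.Adj (f a) (f b) := f.map_rel hadj
    rw [hfeq] at this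
    exact Γ.irrefl this
  choose sel hsel1 hsel2 using hsel
  set P := {p : α × α // p.1 ≠ p.2 ∧ ¬H.Adj p.1 p.2} with hP
  -- the restriction homomorphism
  have hres : ∀ f : {f : H →g Γ // ¬ Function.Injective f},
      ∃ r : contract H (sel f).1 (sel f).2 →g Γ, ∀ x, r x = f.1 x.1 := by
    intro f
    refine ⟨{ toFun := fun x => f.1 x.1, map_rel' := ?_ }, fun _ => rfl⟩
    rintro ⟨a, ha⟩ ⟨b, hb⟩ ⟨hne', h⟩
    rcases h with h | ⟨h1, h2⟩ | ⟨h1, h2⟩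
    · exact f.1.map_rel h
    · have := f.1.map_rel h2
      rw [← hsel2 f, ← h1] at this
      exact this
    · have := f.1.map_rel h2
      rw [← hsel2 f, ← h1] at this
      exact this
  choose res hres' using hres
  let Φ : {f : H →g Γ // ¬ Function.Injective f} →
      Σ p : P, (contract H p.1.1 p.1.2 →g Γ) :=
    fun f => ⟨⟨sel f, hsel1 f⟩, res f⟩
  -- flattening to prove injectivity
  let ev : (Σ p : P, (contract H p.1.1 p.1.2 →g Γ)) → P × (α → Option β) :=
    fun x => ⟨x.1, fun a => if h : a ≠ x.1.1.2 then some (x.2 ⟨a, h⟩) else none⟩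
  let Φ' : {f : H →g Γ // ¬ Function.Injective f} → P × (α → Option β) :=
    fun f => ⟨⟨sel f, hsel1 f⟩, fun a => if _h : a ≠ (sel f).2 then some (f.1 a) else none⟩
  have hΦeq : ev ∘ Φ = Φ' := by
    funext f
    dsimp only [ev, Φ, Φ', Function.comp_apply]
    refine Prod.ext rfl ?_
    funext a
    show (if h : a ≠ (sel f).2 then some ((res f) ⟨a, h⟩) else none)
      = (if _h : a ≠ (sel f).2 then some (f.1 a) else none)
    by_cases h : a ≠ (sel f).2
    · rw [dif_pos h, dif_pos h, hres']
    · rw [dif_neg h, dif_neg h]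
  have hΦ : Function.Injective Φ := by
    have hev : Function.Injective (ev ∘ Φ) := by
      rw [hΦeq]
      intro f g hfg
      have h1 : (⟨sel f, hsel1 f⟩ : P) = ⟨sel g, hsel1 g⟩ := congrArg Prod.fst hfg
      have hsel' : sel f = sel g := Subtype.ext_iff.mp h1
      have h2 := congrArg Prod.snd hfg
      dsimp only [Φ'] at h2
      have hval : ∀ a : α, a ≠ (sel f).2 → f.1 a = g.1 a := by
        intro a ha
        have h3 := congrFun h2 a
        rw [← hsel'] at h3
        rw [dif_pos ha, dif_pos ha] at h3
        exact Option.some_injective _ h3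
      refine Subtype.ext (DFunLike.ext _ _ fun x => ?_)
      by_cases hx : x = (sel f).2
      · have e1 := hsel2 f
        have e2 := hsel2 g
        rw [← hsel'] at e2
        rw [hx, ← e1, ← e2]
        exact hval (sel f).1 (hsel1 f).1
      · exact hval x hx
    exact Function.Injective.of_comp hev
  haveI : Fintype P := Fintype.ofFinite P
  haveI : ∀ p : P, Fintype (contract H p.1.1 p.1.2 →g Γ) := fun p => Fintype.ofFinite _
  have hcard1 : Nat.card {f : H →g Γ // ¬ Function.Injective f}
      ≤ Nat.card (Σ p : P, (contract H p.1.1 p.1.2 →g Γ)) :=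
    Nat.card_le_card_of_injective Φ hΦ
  have hterm : ∀ p : P, Fintype.card (contract H p.1.1 p.1.2 →g Γ)
      ≤ Fintype.card β * D ^ (k - 2) := by
    intro p
    have hconn := contract_connected hH p.2.1 p.2.2
    have hcards : Fintype.card {x : α // x ≠ p.1.2} = k - 1 := by
      rw [Fintype.card_subtype_compl, Fintype.card_subtype_eq]
    have := homCount_le Γ D hΓ (k - 1) (contract H p.1.1 p.1.2) hconn hcards
    have hexp : k - 1 - 1 = k - 2 := by omega
    rw [hexp] at this
    rw [← Nat.card_eq_fintype_card]
    exact this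
  have hsum : Nat.card (Σ p : P, (contract H p.1.1 p.1.2 →g Γ))
      ≤ Fintype.card P * (Fintype.card β * D ^ (k - 2)) := by
    rw [Nat.card_eq_fintype_card, Fintype.card_sigma]
    calc ∑ p : P, Fintype.card (contract H p.1.1 p.1.2 →g Γ)
        ≤ ∑ _p : P, (Fintype.card β * D ^ (k - 2)) := Finset.sum_le_sum fun p _ => hterm p
      _ = Fintype.card P * (Fintype.card β * D ^ (k - 2)) := by
          rw [Finset.sum_const, Finset.card_univ, smul_eq_mul]
  have hPcard : Fintype.card P ≤ k ^ 2 := by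
    rw [← Nat.card_eq_fintype_card]
    have h1 := Nat.card_le_card_of_injective (Subtype.val : P → α × α) Subtype.val_injective
    have h2 : Nat.card (α × α) = k ^ 2 := by
      rw [Nat.card_eq_fintype_card, Fintype.card_prod, sq, hk]
    exact h2 ▸ h1
  calc Nat.card {f : H →g Γ // ¬ Function.Injective f}
      ≤ Fintype.card P * (Fintype.card β * D ^ (k - 2)) := hcard1.trans hsum
    _ ≤ k ^ 2 * (Fintype.card β * D ^ (k - 2)) := Nat.mul_le_mul_right _ hPcard



lemma numComponents_connected {α : Type*} (F : SimpleGraph α) (hF : F.Connected) :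
    numComponents F = 1 := by
  haveI hne : Nonempty α := hF.nonempty
  haveI : Nonempty F.ConnectedComponent := ⟨F.connectedComponentMk (Classical.arbitrary α)⟩
  haveI : Subsingleton F.ConnectedComponent := by
    constructor
    intro c d
    obtain ⟨a, rfl⟩ := c.exists_rep
    obtain ⟨b, rfl⟩ := d.exists_rep
    exact SimpleGraph.ConnectedComponent.sound (hF.preconnected a b)
  rw [numComponents, Nat.card_eq_one_iff_unique]
  exact ⟨inferInstance, inferInstance⟩

lemma numBigComponents_one {α : Type*} (F : SimpleGraph α) (hF : F.Connected)
    (h2 : 2 ≤ Nat.card α) : numBigComponents F = 1 := by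
  haveI hne : Nonempty α := hF.nonempty
  haveI : Subsingleton F.ConnectedComponent := by
    constructor
    intro c d
    obtain ⟨a, rfl⟩ := c.exists_rep
    obtain ⟨b, rfl⟩ := d.exists_rep
    exact SimpleGraph.ConnectedComponent.sound (hF.preconnected a b)
  haveI : Subsingleton {c : F.ConnectedComponent // 2 ≤ Nat.card c.supp} :=
    ⟨fun a b => Subtype.ext (Subsingleton.elim _ _)⟩
  obtain ⟨x⟩ := hne
  have hsupp : (F.connectedComponentMk x).supp = Set.univ :=
    Set.eq_univ_of_forall fun y => by
      rw [SimpleGraph.ConnectedComponent.mem_supp_iff]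
      exact SimpleGraph.ConnectedComponent.sound (hF.preconnected y x)
  have hcard : Nat.card (F.connectedComponentMk x).supp = Nat.card α := by
    rw [hsupp]; exact Nat.card_univ
  haveI : Nonempty {c : F.ConnectedComponent // 2 ≤ Nat.card c.supp} :=
    ⟨⟨F.connectedComponentMk x, by rw [hcard]; exact h2⟩⟩
  rw [numBigComponents, Nat.card_eq_one_iff_unique]
  exact ⟨inferInstance, inferInstance⟩

lemma numBigComponents_zero {α : Type*} [Finite α] (F : SimpleGraph α)
    (h1 : Nat.card α ≤ 1) : numBigComponents F = 0 := by
  haveI : IsEmpty {c : F.ConnectedComponent // 2 ≤ Nat.card c.supp} := by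
    constructor
    rintro ⟨c, hc⟩
    have : Nat.card c.supp ≤ Nat.card α :=
      Nat.card_le_card_of_injective Subtype.val Subtype.val_injective
    omega
  rw [numBigComponents, Nat.card_of_isEmpty]

lemma homCount_card_one {α β : Type*} [Fintype α] [Finite β] (F : SimpleGraph α)
    (Γ : SimpleGraph β) (h1 : Fintype.card α = 1) : homCount F Γ = Nat.card β := by
  haveI : Subsingleton α := Fintype.card_le_one_iff_subsingleton.mp (le_of_eq h1)
  haveI : Nonempty α := Fintype.card_pos_iff.mp (h1 ▸ one_pos)
  let e : (F →g Γ) ≃ (α → β) :=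
    { toFun := fun f => (f : α → β),
      invFun := fun f => ⟨f, fun {a b} h => (F.irrefl (Subsingleton.elim a b ▸ h)).elim⟩,
      left_inv := fun f => rfl,
      right_inv := fun f => rfl }
  rw [homCount, Nat.card_congr e, Nat.card_fun]
  rw [Nat.card_eq_fintype_card (α := α), h1, pow_one]

lemma injCount_eq_homCount_card_one {α β : Type*} [Fintype α] (F : SimpleGraph α)
    (Γ : SimpleGraph β) (h1 : Fintype.card α = 1) : injCount F Γ = homCount F Γ := by
  haveI : Subsingleton α := Fintype.card_le_one_iff_subsingleton.mp (le_of_eq h1)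
  rw [injCount, homCount,
    Nat.card_congr (Equiv.subtypeUnivEquiv fun f => Function.injective_of_subsingleton _)]

lemma homCount_split {α β : Type*} [Finite α] [Finite β] (H : SimpleGraph α)
    (Γ : SimpleGraph β) :
    homCount H Γ = injCount H Γ + Nat.card {f : H →g Γ // ¬ Function.Injective f} := by
  classical
  haveI : Fintype (H →g Γ) := Fintype.ofFinite _
  rw [homCount, injCount, Nat.card_eq_fintype_card, Nat.card_eq_fintype_card,
    Nat.card_eq_fintype_card]
  have h := Fintype.card_subtype_compl (fun f : H →g Γ => Function.Injective f)
  have h2 := Fintype.card_subtype_le (fun f : H →g Γ => Function.Injective f)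
  omega

lemma injCount_le_homCount {α β : Type*} [Finite α] [Finite β] (H : SimpleGraph α)
    (Γ : SimpleGraph β) : injCount H Γ ≤ homCount H Γ :=
  Nat.card_le_card_of_injective Subtype.val Subtype.val_injective


end AuxiliaryLemmas

/-- For admissible pairs `(Gₙ, dₙ)` with `dₙ → ∞`, and a connected graph `F`,
the sequence `t(F,Gₙ,dₙ)` converges iff `t_inj(F,Gₙ,dₙ)` converges, with the same limit. -/
theorem stmt2 (m : ℕ → ℕ) (G : ∀ n, SimpleGraph (Fin (m n))) (d : ℕ → ℝ)
    (hm : ∀ n, 1 ≤ m n) (hd : ∀ n, 1 < d n) (hadm : ∀ n, Admissible (G n) (d n))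
    (hdtop : Tendsto d atTop atTop)
    {α : Type*} [Fintype α] (F : SimpleGraph α) (hF : F.Connected) :
    ((∃ L : ℝ, Tendsto (fun n => homDensity F (G n) (d n)) atTop (𝓝 L)) ↔
      (∃ L : ℝ, Tendsto (fun n => injDensity F (G n) (d n)) atTop (𝓝 L))) ∧
    ∀ L L' : ℝ, Tendsto (fun n => homDensity F (G n) (d n)) atTop (𝓝 L) →
      Tendsto (fun n => injDensity F (G n) (d n)) atTop (𝓝 L') → L = L' := by
  classical
  haveI : Nonempty α := hF.nonempty
  have hcomp : numComponents F = 1 := numComponents_connected F hF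
  set k := Nat.card α with hkdef
  have hkf : Fintype.card α = k := Nat.card_eq_fintype_card.symm
  have hk1 : 1 ≤ k := by
    rw [hkdef, Nat.card_eq_fintype_card]
    exact Fintype.card_pos
  have hdiff : Tendsto (fun n => homDensity F (G n) (d n) - injDensity F (G n) (d n))
      atTop (𝓝 0) := by
    rcases eq_or_lt_of_le hk1 with hk2 | hk2
    · -- k = 1 : both densities are constantly 1
      have hzero : ∀ n, homDensity F (G n) (d n) - injDensity F (G n) (d n) = 0 := by
        intro n
        have hb0 : numBigComponents F = 0 := numBigComponents_zero F (by omega)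
        have hcard1 : Fintype.card α = 1 := by omega
        have hmn : (0:ℝ) < (m n : ℝ) := by exact_mod_cast (hm n)
        have hhc : homCount F (G n) = m n := by
          rw [homCount_card_one F (G n) hcard1, Nat.card_eq_fintype_card, Fintype.card_fin]
        have hic : injCount F (G n) = m n := by
          rw [injCount_eq_homCount_card_one F (G n) hcard1, hhc]
        rw [homDensity, injDensity, hcomp, hb0, hhc, hic, ← hkdef, ← hk2]
        simp only [Nat.card_eq_fintype_card, Fintype.card_fin, pow_one, pow_zero,
          Nat.sub_self, mul_one, one_mul]
        simp [div_self (ne_of_gt hmn)]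
      have : (fun n => homDensity F (G n) (d n) - injDensity F (G n) (d n))
          = fun _ => (0:ℝ) := funext hzero
      rw [this]
      exact tendsto_const_nhds
    · -- k ≥ 2
      have hbig : numBigComponents F = 1 := numBigComponents_one F hF (by omega)
      have hbound : ∀ n, |homDensity F (G n) (d n) - injDensity F (G n) (d n)|
          ≤ (k:ℝ)^2 / d n + ((d n / (d n - 1))^(k-2) - 1) := by
        intro n
        set t := d n with htdef
        have ht : 1 < t := hd n
        have ht0 : (0:ℝ) < t := lt_trans one_pos ht
        have ht1 : (0:ℝ) < t - 1 := sub_pos.mpr ht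
        have hM : (1:ℝ) ≤ (m n : ℝ) := by exact_mod_cast hm n
        have hM0 : (0:ℝ) < (m n : ℝ) := lt_of_lt_of_le one_pos hM
        set D : ℕ := ⌊t⌋₊ with hDdef
        have hdeg : ∀ x, Nat.card ((G n).neighborSet x) ≤ D :=
          fun x => Nat.le_floor ((hadm n).2 x)
        have hDt : (D:ℝ) ≤ t := Nat.floor_le (le_of_lt ht0)
        -- natural number bounds
        have hHomN := homCount_le (G n) D hdeg k F hF hkf
        have hNonN := noninjCount_le (G n) D hdeg F hF
        have hsplitN := homCount_split F (G n)
        have hinjleN := injCount_le_homCount F (G n)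
        rw [Fintype.card_fin] at hHomN hNonN
        rw [hkf] at hNonN
        -- real abbreviations
        set a : ℝ := t^(k-2) with hadef
        set b : ℝ := (t-1)^(k-2) with hbdef
        have ha : (0:ℝ) < a := pow_pos ht0 _
        have hb : (0:ℝ) < b := pow_pos ht1 _
        have hba : b ≤ a := pow_le_pow_left₀ (le_of_lt ht1) (by linarith) _
        have hDa : (D:ℝ)^(k-2) ≤ a := pow_le_pow_left₀ (Nat.cast_nonneg D) hDt _
        have hpow1 : t^(k-1) = a * t := by
          rw [hadef, ← pow_succ]
          congr 1
          omega
        have hH1 : (homCount F (G n) : ℝ) ≤ (m n : ℝ) * (a * t) := by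
          have h1 : (homCount F (G n) : ℝ) ≤ (m n : ℝ) * (D:ℝ)^(k-1) := by
            exact_mod_cast hHomN
          have h2 : ((D:ℝ))^(k-1) ≤ t^(k-1) := pow_le_pow_left₀ (Nat.cast_nonneg D) hDt _
          rw [hpow1] at h2
          nlinarith
        have hIH : (injCount F (G n) : ℝ) ≤ (homCount F (G n) : ℝ) := by exact_mod_cast hinjleN
        have hHI : (homCount F (G n) : ℝ)
            ≤ (injCount F (G n) : ℝ) + (k:ℝ)^2 * ((m n : ℝ) * a) := by
          have h1 : (Nat.card {f : F →g G n // ¬ Function.Injective f} : ℝ)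
              ≤ (k:ℝ)^2 * ((m n : ℝ) * (D:ℝ)^(k-2)) := by exact_mod_cast hNonN
          have h2 : (homCount F (G n) : ℝ) = (injCount F (G n) : ℝ)
              + (Nat.card {f : F →g G n // ¬ Function.Injective f} : ℝ) := by
            exact_mod_cast hsplitN
          have h3 : (k:ℝ)^2 * ((m n:ℝ) * (D:ℝ)^(k-2)) ≤ (k:ℝ)^2 * ((m n:ℝ) * a) := by
            have h4 := mul_le_mul_of_nonneg_left hDa (le_of_lt hM0)
            exact mul_le_mul_of_nonneg_left h4 (by positivity)
          linarith
        have hI0 : (0:ℝ) ≤ (injCount F (G n) : ℝ) := Nat.cast_nonneg _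
        -- identify the densities
        have hX : homDensity F (G n) (d n) = (homCount F (G n) : ℝ) / ((m n : ℝ) * (a * t)) := by
          rw [homDensity, hcomp, ← hkdef, pow_one]
          simp only [Nat.card_eq_fintype_card, Fintype.card_fin]
          rw [← htdef, hpow1]
        have hY : injDensity F (G n) (d n)
            = (injCount F (G n) : ℝ) / ((m n : ℝ) * t * b) := by
          rw [injDensity, hcomp, hbig, ← hkdef, pow_one, pow_one]
          simp only [Nat.card_eq_fintype_card, Fintype.card_fin]
          rw [← htdef]
          have : k - 1 - 1 = k - 2 := by omega
          rw [this, ← hbdef]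
        rw [hX, hY]
        -- main estimate
        have hMne : (m n : ℝ) ≠ 0 := ne_of_gt hM0
        have htne : t ≠ 0 := ne_of_gt ht0
        have hane : a ≠ 0 := ne_of_gt ha
        have hbne : b ≠ 0 := ne_of_gt hb
        have hP : (0:ℝ) < (m n : ℝ) * (a * t) := by positivity
        have hQ : (0:ℝ) < (m n : ℝ) * t * b := by positivity
        have hQP : (m n : ℝ) * t * b ≤ (m n : ℝ) * (a * t) := by nlinarith
        have hIP : (injCount F (G n) : ℝ) ≤ (m n : ℝ) * (a * t) := le_trans hIH hH1
        rw [abs_sub_le_iff]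
        have hdivpow : (t/(t-1))^(k-2) = a/b := by rw [div_pow]
        have h6 : (1:ℝ) ≤ a / b := (one_le_div hb).mpr hba
        have h7 : (0:ℝ) ≤ (k:ℝ)^2 / t := by positivity
        constructor
        · have h1 : (injCount F (G n) : ℝ) / ((m n : ℝ) * (a * t))
              ≤ (injCount F (G n) : ℝ) / ((m n : ℝ) * t * b) :=
            div_le_div_of_nonneg_left hI0 hQ hQP
          have h4 : (homCount F (G n) : ℝ) / ((m n : ℝ) * (a * t))
              - (injCount F (G n) : ℝ) / ((m n : ℝ) * (a * t))
              ≤ ((k:ℝ)^2 * ((m n : ℝ) * a)) / ((m n : ℝ) * (a * t)) := by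
            rw [div_sub_div_same]
            exact (div_le_div_iff_of_pos_right hP).mpr (by linarith)
          have h5 : ((k:ℝ)^2 * ((m n : ℝ) * a)) / ((m n : ℝ) * (a * t)) = (k:ℝ)^2 / t := by
            field_simp
          linarith
        · have h1 : (injCount F (G n) : ℝ) / ((m n : ℝ) * (a * t))
              ≤ (homCount F (G n) : ℝ) / ((m n : ℝ) * (a * t)) :=
            (div_le_div_iff_of_pos_right hP).mpr hIH
          have h3 : (injCount F (G n) : ℝ) / ((m n : ℝ) * t * b)
              - (injCount F (G n) : ℝ) / ((m n : ℝ) * (a * t))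
              = (injCount F (G n) : ℝ)
                * (1/((m n : ℝ) * t * b) - 1/((m n : ℝ) * (a * t))) := by
            ring
          have h4 : (0:ℝ) ≤ 1/((m n : ℝ) * t * b) - 1/((m n : ℝ) * (a * t)) := by
            have := one_div_le_one_div_of_le hQ hQP
            linarith
          have h5 : (injCount F (G n) : ℝ)
                * (1/((m n : ℝ) * t * b) - 1/((m n : ℝ) * (a * t)))
              ≤ ((m n : ℝ) * (a * t)) * (1/((m n : ℝ) * t * b) - 1/((m n : ℝ) * (a * t))) :=
            mul_le_mul_of_nonneg_right hIP h4
          have h6' : ((m n : ℝ) * (a * t)) * (1/((m n : ℝ) * t * b) - 1/((m n : ℝ) * (a * t)))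
              = a/b - 1 := by
            field_simp
          linarith
      have hb1 : Tendsto (fun n => (k:ℝ)^2 / d n) atTop (𝓝 0) :=
        tendsto_const_nhds.div_atTop hdtop
      have hb2 : Tendsto (fun n => d n / (d n - 1)) atTop (𝓝 1) := by
        have h1 : Tendsto (fun n => d n - 1) atTop atTop :=
          (tendsto_atTop_add_const_right atTop (-1) hdtop).congr fun n => by ring
        have h2 : Tendsto (fun n => 1 + 1/(d n - 1)) atTop (𝓝 (1 + 0)) :=
          tendsto_const_nhds.add (tendsto_const_nhds.div_atTop h1)
        rw [add_zero] at h2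
        refine h2.congr fun n => ?_
        have hne : d n - 1 ≠ 0 := ne_of_gt (sub_pos.mpr (hd n))
        field_simp
        ring
      have hb3 : Tendsto (fun n => (d n / (d n - 1))^(k-2)) atTop (𝓝 1) := by
        have := hb2.pow (k-2)
        simpa using this
      have hbnd : Tendsto
          (fun n => (k:ℝ)^2 / d n + ((d n / (d n - 1))^(k-2) - 1)) atTop (𝓝 0) := by
        have := hb1.add (hb3.sub (tendsto_const_nhds (x := (1:ℝ))))
        simpa using this
      exact squeeze_zero_norm (fun n => by rw [Real.norm_eq_abs]; exact hbound n) hbnd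
  constructor
  · constructor
    · rintro ⟨L, hL⟩
      refine ⟨L, ?_⟩
      have h1 := hL.sub hdiff
      rw [sub_zero] at h1
      exact h1.congr fun n => by ring
    · rintro ⟨L, hL⟩
      refine ⟨L, ?_⟩
      have h1 := hL.add hdiff
      rw [add_zero] at h1
      exact h1.congr fun n => by ring
  · intro L L' hL hL'
    have h2 : Tendsto (fun n => injDensity F (G n) (d n)) atTop (𝓝 L) := by
      have h1 := hL.sub hdiff
      rw [sub_zero] at h1
      exact h1.congr fun n => by ring
    exact tendsto_nhds_unique h2 hL'
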